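/- Let F be a field of characteristic 0. For every X ∈ 𝔤𝔰𝔭₄(F) there exist lower-triangular 2×2 matrices Y₁, Y₂ over F with tr Y₁ = tr Y₂, and an upper-triangular matrix Z ∈ 𝔤𝔰𝔭₄(F), such that X = dι(Y₁,Y₂) + u_B·Z·u_B⁻¹. (This is the tangent-space statement that the lower-triangular Borel subgroup of H acts on the flag variety GSp₄/B_G with an open orbit represented by u_B.) -/
import Mathlib


open Matrix

set_option maxHeartbeats 1000000
/-- The standard antisymmetric matrix `J` defining `GSp₄`. -/
def Jmat (R : Type*) [CommRing R] : Matrix (Fin 4) (Fin 4) R :=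
  !![0, 0, 0, 1;
     0, 0, 1, 0;
     0, -1, 0, 0;
     -1, 0, 0, 0]

/-- The derivative of the embedding `ι : H → GSp₄`, on pairs of 2×2 matrices. -/
def diota {R : Type*} [CommRing R] (Y₁ Y₂ : Matrix (Fin 2) (Fin 2) R) :
    Matrix (Fin 4) (Fin 4) R :=
  !![Y₁ 0 0, 0, 0, Y₁ 0 1;
     0, Y₂ 0 0, Y₂ 0 1, 0;
     0, Y₂ 1 0, Y₂ 1 1, 0;
     Y₁ 1 0, 0, 0, Y₁ 1 1]

/-- The representative `u_B` of the open orbit of the lower Borel of `H` on `G/B_G`. -/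
def uB (R : Type*) [CommRing R] : Matrix (Fin 4) (Fin 4) R :=
  !![1, 0, 0, 0;
     1, 1, 0, 0;
     0, 1, 1, 0;
     0, -1, -1, 1]

/-- The Lie-algebra-theoretic open-orbit statement: every element of `𝔤𝔰𝔭₄` is the sum of
an element of the lower Borel subalgebra of `Lie H` and a `u_B`-conjugate of an element of
the upper Borel subalgebra of `𝔤𝔰𝔭₄`. -/
theorem lie_algebra_open_orbit (F : Type*) [Field F] [CharZero F]
    (X : Matrix (Fin 4) (Fin 4) F)
    (hX : ∃ lam : F, Xᵀ * Jmat F + Jmat F * X = lam • Jmat F) :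
    ∃ (Y₁ Y₂ : Matrix (Fin 2) (Fin 2) F) (Z : Matrix (Fin 4) (Fin 4) F),
      Y₁ 0 1 = 0 ∧ Y₂ 0 1 = 0 ∧ Y₁.trace = Y₂.trace ∧
      (∀ i j : Fin 4, j < i → Z i j = 0) ∧
      (∃ mu : F, Zᵀ * Jmat F + Jmat F * Z = mu • Jmat F) ∧
      X = diota Y₁ Y₂ + uB F * Z * (uB F)⁻¹ := by
  obtain ⟨lam, hX⟩ := hX

  have h03 := congrFun (congrFun hX 0) 3
  have h13 := congrFun (congrFun hX 1) 3
  have h23 := congrFun (congrFun hX 2) 3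
  have h12 := congrFun (congrFun hX 1) 2
  have h01 := congrFun (congrFun hX 0) 1
  have h02 := congrFun (congrFun hX 0) 2
  simp [Jmat, Matrix.mul_apply, Fin.sum_univ_four, Matrix.add_apply,
    Matrix.smul_apply, Matrix.transpose_apply, smul_eq_mul, Matrix.vecMul, dotProduct, Matrix.cons_val_zero,
    Matrix.cons_val_one, Matrix.cons_val_two, Matrix.cons_val_three, Matrix.vecHead,
    Matrix.vecTail, Function.comp] at h03 h13 h23 h12 h01 h02
  refine ⟨!![X 0 3/2 + X 1 2/2 - X 1 3 + X 3 1/2 + X 3 2 - X 3 3 + lam, 0;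
             X 3 0 + X 3 1, -(X 0 3/2) - X 1 2/2 + X 1 3 - X 3 1/2 - X 3 2 + X 3 3],
          !![X 0 3/2 + X 1 2/2 - X 1 3 - X 2 2 + X 2 3 + X 3 1/2 + lam, 0;
             X 2 1 + X 3 1, -(X 0 3/2) - X 1 2/2 + X 1 3 + X 2 2 - X 2 3 - X 3 1/2],
          !![-(X 0 3/2) - X 1 2/2 + X 1 3 - X 2 3 - X 3 1/2 - X 3 2,
               -(X 0 3) + X 1 3 - X 2 3, -(X 0 3) + X 1 3, X 0 3;
             0, X 0 3/2 + X 1 2/2 - X 1 3 - X 3 1/2,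
               X 0 3 + X 1 2 - 2*X 1 3, -(X 0 3) + X 1 3;
             0, 0, -(X 0 3/2) - X 1 2/2 + X 1 3 + X 3 1/2, X 0 3 - X 1 3 + X 2 3;
             0, 0, 0, X 0 3/2 + X 1 2/2 - X 1 3 + X 2 3 + X 3 1/2 + X 3 2], ?_, ?_, ?_, ?_, ?_, ?_⟩
  · simp
  · simp
  · simp [Matrix.trace, Fin.sum_univ_two]; ring
  · intro i j hij
    fin_cases i <;> fin_cases j <;>
      simp [Matrix.cons_val_zero, Matrix.cons_val_one, Matrix.cons_val_two,
        Matrix.cons_val_three, Matrix.vecHead, Matrix.vecTail, Function.comp] at hij ⊢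
  · refine ⟨0, ?_⟩
    ext i j
    fin_cases i <;> fin_cases j <;>
      simp [Jmat, Matrix.mul_apply, Fin.sum_univ_four, Matrix.add_apply,
        Matrix.smul_apply, Matrix.transpose_apply, Matrix.cons_val_zero, Matrix.cons_val_one,
        Matrix.cons_val_two, Matrix.cons_val_three, Matrix.vecHead, Matrix.vecTail,
        Function.comp] <;> ring
  · have huB : (uB F)⁻¹ = !![1,0,0,0; -1,1,0,0; 1,-1,1,0; 0,0,1,1] := by
      apply Matrix.inv_eq_right_inv
      ext i j
      fin_cases i <;> fin_cases j <;>
        simp [uB, Matrix.mul_apply, Fin.sum_univ_four, Matrix.one_apply, Matrix.cons_val_zero,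
          Matrix.cons_val_one, Matrix.cons_val_two, Matrix.cons_val_three, Matrix.vecHead,
          Matrix.vecTail, Function.comp]
    rw [huB]
    ext i j
    fin_cases i <;> fin_cases j <;>
      simp [diota, uB, Matrix.mul_apply, Fin.sum_univ_four, Matrix.add_apply,
        Matrix.cons_val_zero, Matrix.cons_val_one, Matrix.cons_val_two, Matrix.cons_val_three,
        Matrix.vecHead, Matrix.vecTail, Function.comp] <;>
      first
      | rfl
      | linear_combination h03
      | linear_combination h13
      | linear_combination h23
      | linear_combination h12
      | linear_combination -h01
      | linear_combination h02
      | ring
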